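/- Let D be a positive integer, n ≥ 0 an integer, h > 0, λ_s ∈ ℝ, and let ε̂ : ℝ → ℝ^D be (n+1)-times continuously differentiable on [λ_s, λ_s + h] with ‖ε̂^{(n+1)}(u)‖ ≤ M for all u ∈ [λ_s, λ_s + h]. Then ‖ ∫_0^h e^{h−u} ε̂(λ_s + u) du − Σ_{k=0}^{n} ε̂^{(k)}(λ_s) · (e^h − Σ_{j=0}^{k} h^j/j!) ‖ ≤ M · e^h · h^{n+2}/(n+2)!. That is, the n-th order Taylor expansion of the noise-prediction exponential integral has truncation error of order h^{n+2}. -/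

import Mathlib

open Set Nat

theorem taylor_sharp {E : Type*} [NormedAddCommGroup E] [NormedSpace ℝ E]
    {f : ℝ → E} {a b C x : ℝ} {n : ℕ} (hab : a ≤ b)
    (hf : ContDiffOn ℝ (n + 1) f (Icc a b)) (hx : x ∈ Icc a b)
    (hC : ∀ y ∈ Icc a b, ‖iteratedDerivWithin (n + 1) f (Icc a b) y‖ ≤ C) :
    ‖f x - taylorWithinEval f n (Icc a b) a x‖ ≤ C * (x - a) ^ (n + 1) / (n + 1)! := by
  rcases eq_or_lt_of_le hab with (rfl | hab')
  · rw [Icc_self, mem_singleton_iff] at hx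
    simp [hx]
  have hf' : DifferentiableOn ℝ (iteratedDerivWithin n f (Icc a b)) (Icc a b) :=
    hf.differentiableOn_iteratedDerivWithin (mod_cast n.lt_succ_self) (uniqueDiffOn_Icc hab')
  set g : ℝ → E := fun y =>
    taylorWithinEval f n (Icc a b) y x - taylorWithinEval f n (Icc a b) a x with hg_def
  set B : ℝ → ℝ := fun y => C / (n + 1)! * ((x - a) ^ (n + 1) - (x - y) ^ (n + 1)) with hB_def
  have hIsub : Icc a x ⊆ Icc a b := Icc_subset_Icc_right hx.2
  have hA : ∀ t ∈ Icc a x, HasDerivWithinAt g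
      (((n ! : ℝ)⁻¹ * (x - t) ^ n) • iteratedDerivWithin (n + 1) f (Icc a b) t) (Icc a b) t := by
    intro t ht
    exact ((hasDerivWithinAt_taylorWithinEval_at_Icc x hab' (hIsub ht) hf.of_succ hf').sub_const _)
  have key : ∀ y ∈ Icc a x, ‖g y‖ ≤ B y := by
    refine image_norm_le_of_norm_deriv_right_le_deriv_boundary
      (f' := fun t => ((n ! : ℝ)⁻¹ * (x - t) ^ n) • iteratedDerivWithin (n + 1) f (Icc a b) t)
      (B' := fun t => C / (n + 1)! * ((n + 1) * (x - t) ^ n))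
      (fun t ht => ((hA t ht).mono hIsub).continuousWithinAt)
      (fun t ht => ?_) (by simp [hg_def, hB_def]) (fun t => ?_) (fun t ht => ?_)
    · have htb : t ∈ Ico a b := ⟨ht.1, lt_of_lt_of_le ht.2 hx.2⟩
      exact (hA t (Ico_subset_Icc_self ht)).mono_of_mem_nhdsWithin (Icc_mem_nhdsGE_of_mem htb)
    · have h1 : HasDerivAt (fun y => (x - y) ^ (n + 1)) (-(n + 1) * (x - t) ^ n) t :=
        monomial_has_deriv_aux t x n
      have h2 := ((hasDerivAt_const t ((x - a) ^ (n + 1))).fun_sub h1).const_mul (C / (n + 1)!)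
      refine h2.congr_deriv ?_
      ring
    · rw [norm_smul, Real.norm_eq_abs]
      have hxt : (0:ℝ) ≤ x - t := sub_nonneg.2 ht.2.le
      have hD := hC t (hIsub (Ico_subset_Icc_self ht))
      have habs : |(n ! : ℝ)⁻¹ * (x - t) ^ n| = (n ! : ℝ)⁻¹ * (x - t) ^ n := by
        rw [abs_of_nonneg]; positivity
      rw [habs]
      calc (n ! : ℝ)⁻¹ * (x - t) ^ n * ‖iteratedDerivWithin (n + 1) f (Icc a b) t‖
          ≤ (n ! : ℝ)⁻¹ * (x - t) ^ n * C := by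
            apply mul_le_mul_of_nonneg_left hD; positivity
        _ = C / (n + 1)! * ((n + 1) * (x - t) ^ n) := by
            rw [Nat.factorial_succ]
            push_cast
            have h0 : (n ! : ℝ) ≠ 0 := Nat.cast_ne_zero.2 n.factorial_ne_zero
            field_simp
  have := key x (right_mem_Icc.2 hx.1)
  simp only [hg_def, hB_def, taylorWithinEval_self, sub_self] at this
  calc ‖f x - taylorWithinEval f n (Icc a b) a x‖
      ≤ C / (n + 1)! * ((x - a) ^ (n + 1) - 0 ^ (n + 1)) := this
    _ = C * (x - a) ^ (n + 1) / (n + 1)! := by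
        rw [zero_pow (Nat.succ_ne_zero n)]
        ring
open Set Nat

theorem exp_poly_deriv (h : ℝ) (k : ℕ) (u : ℝ) :
    HasDerivAt (fun t => -(Real.exp (h - t) * ∑ j ∈ Finset.range (k + 1), t ^ j / j !))
      (Real.exp (h - u) * (u ^ k / k !)) u := by
  have hexp : HasDerivAt (fun t : ℝ => Real.exp (h - t)) (-Real.exp (h - u)) u := by
    have h1 : HasDerivAt (fun t : ℝ => h - t) (-1) u := by
      exact (hasDerivAt_id u).const_sub h
    have h2 := h1.exp
    rwa [mul_neg_one] at h2
  have hS : HasDerivAt (fun t : ℝ => ∑ j ∈ Finset.range (k + 1), t ^ j / j !)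
      ((∑ j ∈ Finset.range (k + 1), u ^ j / j !) - u ^ k / k !) u := by
    have hS' : HasDerivAt (fun t : ℝ => ∑ j ∈ Finset.range (k + 1), t ^ j / j !)
        (∑ j ∈ Finset.range (k + 1), (j : ℝ) * u ^ (j - 1) / j !) u := by
      apply HasDerivAt.fun_sum
      intro j _
      exact (hasDerivAt_pow j u).div_const _
    convert hS' using 1
    rw [Finset.sum_range_succ' (fun j => (j : ℝ) * u ^ (j - 1) / j !) k]
    rw [Finset.sum_range_succ (fun j => u ^ j / (j ! : ℝ)) k]
    simp only [Nat.cast_zero, zero_mul, zero_div, add_zero, add_sub_cancel_right]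
    apply Finset.sum_congr rfl
    intro i _
    rw [Nat.factorial_succ]
    push_cast
    have h0 : (i ! : ℝ) ≠ 0 := Nat.cast_ne_zero.2 i.factorial_ne_zero
    field_simp
  have := (hexp.fun_mul hS).fun_neg
  refine this.congr_deriv ?_
  ring

theorem exp_int_identity (h : ℝ) (k : ℕ) :
    (∫ u in (0:ℝ)..h, Real.exp (h - u) * (u ^ k / k !)) =
      Real.exp h - ∑ j ∈ Finset.range (k + 1), h ^ j / j ! := by
  have hcont : Continuous fun u : ℝ => Real.exp (h - u) * (u ^ k / k !) := by
    fun_prop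
  have := intervalIntegral.integral_eq_sub_of_hasDerivAt
    (f := fun t => -(Real.exp (h - t) * ∑ j ∈ Finset.range (k + 1), t ^ j / j !))
    (fun u _ => exp_poly_deriv h k u) (hcont.intervalIntegrable 0 h)
  rw [this]
  have h0 : (∑ j ∈ Finset.range (k + 1), (0:ℝ) ^ j / j !) = 1 := by
    rw [Finset.sum_range_succ' (fun j => (0:ℝ) ^ j / j !) k]
    simp [zero_pow]
  simp only [sub_self, sub_zero, h0, Real.exp_zero, mul_one]
  ring

/-- The `n`-th order Taylor expansion of the noise-prediction exponential
integral has truncation error of order `h^(n+2)`. -/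
theorem stmt_4 (D n : ℕ) (hD : 0 < D) (h M : ℝ) (hh : 0 < h) (l : ℝ)
    (ε : ℝ → EuclideanSpace ℝ (Fin D))
    (hε : ContDiffOn ℝ (n + 1 : ℕ) ε (Set.Icc l (l + h)))
    (hM : ∀ u ∈ Set.Icc l (l + h),
      ‖iteratedDerivWithin (n + 1) ε (Set.Icc l (l + h)) u‖ ≤ M) :
    ‖(∫ u in (0:ℝ)..h, Real.exp (h - u) • ε (l + u)) -
        ∑ k ∈ Finset.range (n + 1),
          (Real.exp h - ∑ j ∈ Finset.range (k + 1), h ^ j / (j.factorial : ℝ)) •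
            iteratedDerivWithin k ε (Set.Icc l (l + h)) l‖ ≤
      M * Real.exp h * h ^ (n + 2) / ((n + 2).factorial : ℝ) := by
  have hle : l ≤ l + h := by linarith
  set s := Set.Icc l (l + h) with hs_def
  have hM0 : 0 ≤ M := le_trans (norm_nonneg _) (hM l (Set.left_mem_Icc.2 hle))
  set P : ℝ → EuclideanSpace ℝ (Fin D) := fun u => taylorWithinEval ε n s l (l + u) with hP_def
  have hPexp : ∀ u : ℝ, Real.exp (h - u) • P u =
      ∑ k ∈ Finset.range (n + 1),
        (Real.exp (h - u) * (u ^ k / k !)) • iteratedDerivWithin k ε s l := by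
    intro u
    rw [hP_def]
    simp only [taylor_within_apply, Finset.smul_sum]
    refine Finset.sum_congr rfl fun k _ => ?_
    rw [smul_smul]
    congr 1
    have huu : l + u - l = u := by ring
    rw [huu]
    ring
  have h1 : (∫ u in (0:ℝ)..h, Real.exp (h - u) • P u) =
      ∑ k ∈ Finset.range (n + 1),
        (Real.exp h - ∑ j ∈ Finset.range (k + 1), h ^ j / (j ! : ℝ)) •
          iteratedDerivWithin k ε s l := by
    simp_rw [hPexp]
    rw [intervalIntegral.integral_finset_sum]
    · refine Finset.sum_congr rfl fun k _ => ?_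
      rw [intervalIntegral.integral_smul_const, exp_int_identity]
    · intro k _
      exact ((by fun_prop : Continuous fun u : ℝ => Real.exp (h - u) * (u ^ k / k !)).smul
        continuous_const).intervalIntegrable 0 h
  have hmap : ∀ u ∈ Set.uIcc (0:ℝ) h, l + u ∈ s := by
    intro u hu
    rw [Set.uIcc_of_le hh.le] at hu
    exact ⟨by linarith [hu.1], by linarith [hu.2]⟩
  have hint1 : IntervalIntegrable (fun u => Real.exp (h - u) • ε (l + u))
      MeasureTheory.volume 0 h := by
    apply ContinuousOn.intervalIntegrable
    exact ((Real.continuous_exp.comp (continuous_const.sub continuous_id)).continuousOn).smul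
      (hε.continuousOn.comp (continuous_const.add continuous_id).continuousOn hmap)
  have hint2 : IntervalIntegrable (fun u => Real.exp (h - u) • P u)
      MeasureTheory.volume 0 h := by
    have he : (fun u => Real.exp (h - u) • P u) = fun u =>
        ∑ k ∈ Finset.range (n + 1),
          (Real.exp (h - u) * (u ^ k / k !)) • iteratedDerivWithin k ε s l := funext hPexp
    rw [he]
    refine Continuous.intervalIntegrable ?_ 0 h
    refine continuous_finset_sum _ fun k _ => ?_
    exact (by fun_prop : Continuous fun u : ℝ => Real.exp (h - u) * (u ^ k / k !)).smul
      continuous_const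
  have key : (∫ u in (0:ℝ)..h, Real.exp (h - u) • ε (l + u)) -
      ∑ k ∈ Finset.range (n + 1),
        (Real.exp h - ∑ j ∈ Finset.range (k + 1), h ^ j / (j ! : ℝ)) •
          iteratedDerivWithin k ε s l =
      ∫ u in (0:ℝ)..h, Real.exp (h - u) • (ε (l + u) - P u) := by
    rw [← h1, ← intervalIntegral.integral_sub hint1 hint2]
    simp_rw [smul_sub]
  rw [key]
  have hint3 : IntervalIntegrable (fun u => Real.exp (h - u) • (ε (l + u) - P u))
      MeasureTheory.volume 0 h := by
    have := hint1.sub hint2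
    simpa [smul_sub] using this
  have hbound : ∀ u ∈ Set.Icc (0:ℝ) h,
      ‖Real.exp (h - u) • (ε (l + u) - P u)‖ ≤ Real.exp h * M / (n + 1)! * u ^ (n + 1) := by
    intro u hu
    rw [norm_smul, Real.norm_eq_abs, Real.abs_exp]
    have hx : l + u ∈ s := ⟨by linarith [hu.1], by linarith [hu.2]⟩
    have ht := taylor_sharp hle hε hx hM
    have huu : l + u - l = u := by ring
    rw [huu] at ht
    calc Real.exp (h - u) * ‖ε (l + u) - P u‖
        ≤ Real.exp h * (M * u ^ (n + 1) / (n + 1)!) := by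
          apply mul_le_mul (Real.exp_le_exp.2 (by linarith [hu.1])) ht (norm_nonneg _)
            (Real.exp_pos h).le
      _ = Real.exp h * M / (n + 1)! * u ^ (n + 1) := by ring
  calc ‖∫ u in (0:ℝ)..h, Real.exp (h - u) • (ε (l + u) - P u)‖
      ≤ ∫ u in (0:ℝ)..h, ‖Real.exp (h - u) • (ε (l + u) - P u)‖ :=
        intervalIntegral.norm_integral_le_integral_norm hh.le
    _ ≤ ∫ u in (0:ℝ)..h, Real.exp h * M / (n + 1)! * u ^ (n + 1) := by
        apply intervalIntegral.integral_mono_on hh.le hint3.norm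
        exact (Continuous.intervalIntegrable (by fun_prop) 0 h)
        exact hbound
    _ = Real.exp h * M / (n + 1)! * (h ^ (n + 2) / (n + 2)) := by
        rw [intervalIntegral.integral_const_mul, integral_pow,
          show (0:ℝ) ^ (n + 1 + 1) = 0 from zero_pow (by omega), sub_zero]
        push_cast
        ring
    _ = M * Real.exp h * h ^ (n + 2) / ((n + 2)! : ℝ) := by
        rw [show (n + 2)! = (n + 2) * (n + 1)! from rfl]
        push_cast
        have h0 : ((n + 1)! : ℝ) ≠ 0 := Nat.cast_ne_zero.2 (n + 1).factorial_ne_zero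
        have h2 : ((n : ℝ) + 2) ≠ 0 := by positivity
        field_simp
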